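/- E_pri[D*] = (1 − p)² · D, and consequently, if n ≥ 1 and p < 1, E_pri[D*]/E_pri[n*] = (1 − p)·d_avg. -/

import Mathlib

open Finset

noncomputable def priWeight {n : ℕ} (p : ℝ) (ω : Fin n → Bool) : ℝ :=
  ∏ i, if ω i then p else 1 - p

def pubNodes {n : ℕ} (ω : Fin n → Bool) : Finset (Fin n) :=
  Finset.univ.filter fun i => ω i = false

def pubDeg {n : ℕ} (G : SimpleGraph (Fin n)) [DecidableRel G.Adj]
    (ω : Fin n → Bool) (i : Fin n) : ℕ :=
  ((G.neighborFinset i).filter fun j => ω j = false).card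

noncomputable def indPub {n : ℕ} (ω : Fin n → Bool) (i : Fin n) : ℝ :=
  if ω i = false then 1 else 0

lemma cast_card_filter' {α : Type*} (s : Finset α) (q : α → Prop) [DecidablePred q] :
    ((s.filter q).card : ℝ) = ∑ j ∈ s, if q j then (1 : ℝ) else 0 := by
  rw [Finset.card_filter]; push_cast; simp

lemma sum_fun_bool {n : ℕ} (f : Fin n → Bool → ℝ) :
    ∑ ω : Fin n → Bool, ∏ i, f i (ω i) = ∏ i, (f i false + f i true) := by
  rw [eq_comm]
  calc ∏ i, (f i false + f i true) = ∏ i, ∑ b, f i b := by simp [add_comm]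
    _ = ∑ ω : Fin n → Bool, ∏ i, f i (ω i) := Fintype.prod_sum _

lemma key {n : ℕ} (p : ℝ) (S : Finset (Fin n)) :
    ∑ ω : Fin n → Bool, priWeight p ω * ∏ i ∈ S, indPub ω i
      = (1 - p) ^ S.card := by
  have h : ∀ ω : Fin n → Bool, priWeight p ω * ∏ i ∈ S, indPub ω i
      = ∏ i, ((if ω i = true then p else 1 - p) *
          (if i ∈ S then (if ω i = false then (1:ℝ) else 0) else 1)) := by
    intro ω
    rw [Finset.prod_mul_distrib, priWeight]
    congr 1
    rw [← Finset.prod_filter]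
    simp only [indPub]
    congr 1
    simp [Finset.filter_mem_eq_inter]
  simp only [h]
  rw [sum_fun_bool fun i b =>
    (if b = true then p else 1 - p) * (if i ∈ S then (if b = false then (1:ℝ) else 0) else 1)]
  rw [Finset.prod_congr rfl (fun i _ => show _ = if i ∈ S then 1 - p else 1 from by
    by_cases hi : i ∈ S <;> simp [hi] <;> ring)]
  rw [Finset.prod_ite_mem, Finset.univ_inter, Finset.prod_const]

theorem stmt_16 (n : ℕ) (hn : 1 ≤ n) (G : SimpleGraph (Fin n)) [DecidableRel G.Adj]
    (p : ℝ) (hp0 : 0 ≤ p) (hp1 : p < 1) :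
    (∑ ω : Fin n → Bool, priWeight p ω * ∑ i ∈ pubNodes ω, (pubDeg G ω i : ℝ))
        = (1 - p) ^ 2 * ∑ i, (G.degree i : ℝ) ∧
    (∑ ω : Fin n → Bool, priWeight p ω * ∑ i ∈ pubNodes ω, (pubDeg G ω i : ℝ)) /
        (∑ ω : Fin n → Bool, priWeight p ω * ((pubNodes ω).card : ℝ))
      = (1 - p) * ((∑ i, (G.degree i : ℝ)) / (n : ℝ)) := by
  have h1p : (1 : ℝ) - p ≠ 0 := by linarith
  have hnum : (∑ ω : Fin n → Bool, priWeight p ω * ∑ i ∈ pubNodes ω, (pubDeg G ω i : ℝ))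
      = (1 - p) ^ 2 * ∑ i, (G.degree i : ℝ) := by
    have hrw : ∀ ω : Fin n → Bool,
        (∑ i ∈ pubNodes ω, (pubDeg G ω i : ℝ))
          = ∑ i, ∑ j ∈ G.neighborFinset i, ∏ k ∈ ({i, j} : Finset (Fin n)), indPub ω k := by
      intro ω
      rw [pubNodes, Finset.sum_filter]
      apply Finset.sum_congr rfl
      intro i _
      by_cases hi : ω i = false
      · rw [if_pos hi, pubDeg, cast_card_filter']
        apply Finset.sum_congr rfl
        intro j hj
        have hij : i ≠ j := fun h => G.irrefl (h ▸ (G.mem_neighborFinset i j).mp hj)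
        rw [Finset.prod_pair hij]
        by_cases hjf : ω j = false <;> simp [indPub, hi, hjf]
      · rw [if_neg hi, eq_comm, Finset.sum_eq_zero]
        intro j hj
        have hij : i ≠ j := fun h => G.irrefl (h ▸ (G.mem_neighborFinset i j).mp hj)
        rw [Finset.prod_pair hij]
        simp [indPub, hi]
    simp only [hrw, Finset.mul_sum]
    rw [Finset.sum_comm]
    have hinner : ∀ i : Fin n, ∑ j ∈ G.neighborFinset i,
        ∑ ω : Fin n → Bool, priWeight p ω * ∏ k ∈ ({i, j} : Finset (Fin n)), indPub ω k
        = (1 - p) ^ 2 * (G.degree i : ℝ) := by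
      intro i
      rw [Finset.sum_congr rfl (fun j hj => ?_), Finset.sum_const,
        SimpleGraph.card_neighborFinset_eq_degree, nsmul_eq_mul, mul_comm]
      have hij : i ≠ j := fun h => G.irrefl (h ▸ (G.mem_neighborFinset i j).mp hj)
      rw [key, Finset.card_pair hij]
    rw [Finset.sum_congr rfl fun i _ => Finset.sum_comm.symm.trans (hinner i), ← Finset.mul_sum]
  have hden : (∑ ω : Fin n → Bool, priWeight p ω * ((pubNodes ω).card : ℝ))
      = (1 - p) * n := by
    have hrw : ∀ ω : Fin n → Bool, ((pubNodes ω).card : ℝ)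
        = ∑ i, ∏ k ∈ ({i} : Finset (Fin n)), indPub ω k := by
      intro ω
      rw [pubNodes, cast_card_filter']
      apply Finset.sum_congr rfl
      intro i _
      by_cases hi : ω i = false <;> simp [indPub, hi]
    simp only [hrw, Finset.mul_sum]
    rw [Finset.sum_comm, Finset.sum_congr rfl fun i _ => key p {i}]
    simp [mul_comm]
    ring
  refine ⟨hnum, ?_⟩
  rw [hnum, hden]
  have hn' : (n : ℝ) ≠ 0 := Nat.cast_ne_zero.mpr (by omega)
  field_simp
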